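/- Let q = 2^ℓ, and let F₀ be the set of univariate polynomials over F_q of degree < q−1. Let L be a family of parameterized affine lines in F_q² such that every point of F_q² lies on at least s pairwise non-equivalent lines of L. Then the evaluation code of the partial lift of F₀ with respect to L (bivariate polynomials P such that P|_L ∈ F₀ for all L ∈ L) is a linear code of length q² with the s-DRGP: each symbol P(x,y) equals the sum of the values of P on the other q−1 points of any line of L through (x,y), and lines through (x,y) intersect pairwise only at (x,y). -/

import Mathlib

open Polynomial

/-- The image of the parameterized affine line `L(T) = (αT + β, γT + δ)`,
encoded as `L = ((α, β), (γ, δ))`. -/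
def lineImage {F : Type*} [Field F] (L : (F × F) × (F × F)) : Set (F × F) :=
  Set.range (fun t : F => (L.1.1 * t + L.1.2, L.2.1 * t + L.2.2))

/-- A bivariate polynomial `P` restricts nicely on the line `L`: the reduction
mod `T^q - T` of `P(αT + β, γT + δ)` has degree `< q - 1`. -/
def RestrictsNicely {F : Type*} [Field F] (q : ℕ)
    (P : MvPolynomial (Fin 2) F) (L : (F × F) × (F × F)) : Prop :=
  ((MvPolynomial.aeval
      ![C L.1.1 * X + C L.1.2, C L.2.1 * X + C L.2.2] P : F[X]) %ₘ (X ^ q - X)).degree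
    < ((q - 1 : ℕ) : WithBot ℕ)

section Aux

variable {F : Type*} [Field F]

/-- The parameterization of the line `L`. -/
def lineFun (L : (F × F) × (F × F)) (t : F) : F × F :=
  (L.1.1 * t + L.1.2, L.2.1 * t + L.2.2)

lemma lineImage_eq_range (L : (F × F) × (F × F)) :
    lineImage L = Set.range (lineFun L) := rfl

lemma lineFun_injective {L : (F × F) × (F × F)}
    (h : (L.1.1, L.2.1) ≠ ((0 : F), (0 : F))) : Function.Injective (lineFun L) := by
  intro t t' ht
  by_contra hne
  apply h
  have h1 : L.1.1 * t + L.1.2 = L.1.1 * t' + L.1.2 := congrArg Prod.fst ht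
  have h2 : L.2.1 * t + L.2.2 = L.2.1 * t' + L.2.2 := congrArg Prod.snd ht
  have hd : t - t' ≠ 0 := sub_ne_zero.mpr hne
  have e1 : L.1.1 * (t - t') = 0 := by ring_nf; linear_combination h1
  have e2 : L.2.1 * (t - t') = 0 := by ring_nf; linear_combination h2
  have : L.1.1 = 0 := by
    rcases mul_eq_zero.mp e1 with h | h
    · exact h
    · exact absurd h hd
  have : L.2.1 = 0 := by
    rcases mul_eq_zero.mp e2 with h | h
    · exact h
    · exact absurd h hd
  simp_all

/-- Two nondegenerate lines sharing two distinct points have the same image. -/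
lemma lineImage_eq_of_two_points {L L' : (F × F) × (F × F)}
    (hL : (L.1.1, L.2.1) ≠ ((0 : F), (0 : F)))
    (hL' : (L'.1.1, L'.2.1) ≠ ((0 : F), (0 : F)))
    {p x : F × F} (hpx : x ≠ p)
    (hp : p ∈ lineImage L) (hp' : p ∈ lineImage L')
    (hx : x ∈ lineImage L) (hx' : x ∈ lineImage L') :
    lineImage L = lineImage L' := by
  obtain ⟨⟨α, β⟩, γ, δ⟩ := L
  obtain ⟨⟨α', β'⟩, γ', δ'⟩ := L'
  simp only at hL hL'
  obtain ⟨a, ha⟩ := hp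
  obtain ⟨b, hb⟩ := hx
  obtain ⟨a', ha'⟩ := hp'
  obtain ⟨b', hb'⟩ := hx'
  simp only at ha hb ha' hb'
  have ha1 : α * a + β = p.1 := congrArg Prod.fst ha
  have ha2 : γ * a + δ = p.2 := congrArg Prod.snd ha
  have hb1 : α * b + β = x.1 := congrArg Prod.fst hb
  have hb2 : γ * b + δ = x.2 := congrArg Prod.snd hb
  have ha1' : α' * a' + β' = p.1 := congrArg Prod.fst ha'
  have ha2' : γ' * a' + δ' = p.2 := congrArg Prod.snd ha'
  have hb1' : α' * b' + β' = x.1 := congrArg Prod.fst hb'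
  have hb2' : γ' * b' + δ' = x.2 := congrArg Prod.snd hb'
  have hba : b - a ≠ 0 := by
    intro h
    apply hpx
    have hba0 : b = a := sub_eq_zero.mp h
    subst hba0
    rw [← ha, ← hb]
  have hba' : b' - a' ≠ 0 := by
    intro h
    apply hpx
    have hba0 : b' = a' := sub_eq_zero.mp h
    subst hba0
    rw [← ha', ← hb']
  have d1 : α * (b - a) = α' * (b' - a') := by linear_combination hb1 - ha1 - hb1' + ha1'
  have d2 : γ * (b - a) = γ' * (b' - a') := by linear_combination hb2 - ha2 - hb2' + ha2'
  have hpa1 : α * a + β = α' * a' + β' := ha1.trans ha1'.symm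
  have hpa2 : γ * a + δ = γ' * a' + δ' := ha2.trans ha2'.symm
  have side : ∀ (α β γ δ α' β' γ' δ' a b a' b' : F), b' - a' ≠ 0 →
      α * (b - a) = α' * (b' - a') → γ * (b - a) = γ' * (b' - a') →
      α * a + β = α' * a' + β' → γ * a + δ = γ' * a' + δ' →
      lineImage ((α', β'), (γ', δ')) ⊆ lineImage ((α, β), (γ, δ)) := by
    clear * -
    intro α β γ δ α' β' γ' δ' a b a' b' hba' d1 d2 hpa1 hpa2
    rintro z ⟨t, rfl⟩
    refine ⟨a + (t - a') * (b - a) / (b' - a'), Prod.ext ?_ ?_⟩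
    · show α * (a + (t - a') * (b - a) / (b' - a')) + β = α' * t + β'
      field_simp
      linear_combination (t - a') * d1 + (b' - a') * hpa1
    · show γ * (a + (t - a') * (b - a) / (b' - a')) + δ = γ' * t + δ'
      field_simp
      linear_combination (t - a') * d2 + (b' - a') * hpa2
  apply Set.Subset.antisymm
  · exact side α' β' γ' δ' α β γ δ a' b' a b hba d1.symm d2.symm hpa1.symm hpa2.symm
  · exact side α β γ δ α' β' γ' δ' a b a' b' hba' d1 d2 hpa1 hpa2

variable [Fintype F]

/-- The values of a nicely-restricting polynomial along a line sum to zero. -/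
lemma sum_line_eval_eq_zero {q : ℕ} (hcard : Fintype.card F = q)
    (P : MvPolynomial (Fin 2) F) (L : (F × F) × (F × F))
    (h : RestrictsNicely q P L) :
    ∑ t : F, MvPolynomial.eval ![(lineFun L t).1, (lineFun L t).2] P = 0 := by
  have hq2 : 2 ≤ q := hcard ▸ Fintype.one_lt_card
  set f : F[X] := MvPolynomial.aeval
      ![C L.1.1 * X + C L.1.2, C L.2.1 * X + C L.2.2] P with hf
  -- evaluation of f gives the values on the line
  have heval : ∀ t : F, f.eval t = MvPolynomial.eval ![(lineFun L t).1, (lineFun L t).2] P := by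
    intro t
    have hcomp := MvPolynomial.comp_aeval (R := F)
      (f := ![C L.1.1 * X + C L.1.2, C L.2.1 * X + C L.2.2])
      (Polynomial.aeval t : F[X] →ₐ[F] F)
    have happ := DFunLike.congr_fun hcomp P
    simp only [AlgHom.coe_comp, Function.comp_apply] at happ
    have h1 : (Polynomial.aeval t : F[X] →ₐ[F] F) f = f.eval t := by
      rw [show ((Polynomial.aeval t : F[X] →ₐ[F] F) f : F) = (Polynomial.aeval t : F[X] → F) f from rfl,
        Polynomial.coe_aeval_eq_eval]
    have h2 : (fun i => (Polynomial.aeval t : F[X] →ₐ[F] F)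
        (![C L.1.1 * X + C L.1.2, C L.2.1 * X + C L.2.2] i))
        = ![(lineFun L t).1, (lineFun L t).2] := by
      funext i
      fin_cases i <;> simp [lineFun]
    rw [← h1, happ, h2, ← MvPolynomial.coe_aeval_eq_eval]
    rfl
  -- X^q - X is monic
  have hmon : Monic (X ^ q - X : F[X]) := by
    apply monic_X_pow_sub
    rw [Polynomial.degree_X]
    exact_mod_cast Nat.lt_of_lt_of_le Nat.one_lt_two hq2
  set r : F[X] := f %ₘ (X ^ q - X) with hr
  -- f and r agree on all of F
  have hagree : ∀ t : F, r.eval t = f.eval t := by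
    intro t
    have := Polynomial.modByMonic_add_div f (X ^ q - X)
    have := congrArg (Polynomial.eval t) this
    simp only [Polynomial.eval_add, Polynomial.eval_mul, Polynomial.eval_sub,
      Polynomial.eval_pow, Polynomial.eval_X] at this
    rw [show t ^ q = t from hcard ▸ FiniteField.pow_card t] at this
    simpa using this
  -- sum of r over F is zero since deg r < q - 1
  have hsum : ∑ t : F, r.eval t = 0 := by
    rcases eq_or_ne r 0 with h0 | h0
    · simp [h0]
    · have hdeg : r.natDegree < q - 1 := by
        have := h
        rw [RestrictsNicely] at this
        exact (Polynomial.natDegree_lt_iff_degree_lt h0).mpr this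
      have hswap : ∑ t : F, r.eval t
          = ∑ i ∈ Finset.range (r.natDegree + 1), ∑ t : F, r.coeff i * t ^ i := by
        rw [Finset.sum_comm]
        exact Finset.sum_congr rfl fun t _ => Polynomial.eval_eq_sum_range (p := r) t
      rw [hswap]
      refine Finset.sum_eq_zero fun i hi => ?_
      rw [← Finset.mul_sum]
      have hilt : i < Fintype.card F - 1 := by
        rw [hcard]
        have := Finset.mem_range.mp hi
        omega
      rw [FiniteField.sum_pow_lt_card_sub_one (K := F) i hilt, mul_zero]
  calc ∑ t : F, MvPolynomial.eval ![(lineFun L t).1, (lineFun L t).2] P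
      = ∑ t : F, r.eval t := by
        refine Finset.sum_congr rfl fun t _ => ?_
        rw [hagree, heval]
    _ = 0 := hsum

end Aux

/-- Partial lifts have the `s`-DRGP. -/
theorem partial_lift_drgp (ℓ : ℕ) (F : Type*) [Field F] [Fintype F]
    (hF : Fintype.card F = 2 ^ ℓ) (q : ℕ) (hq : q = 2 ^ ℓ)
    (𝓛 : Set ((F × F) × (F × F)))
    (hnd : ∀ L ∈ 𝓛, (L.1.1, L.2.1) ≠ ((0 : F), (0 : F)))
    (s : ℕ)
    (hcover : ∀ p : F × F, ∃ S : Finset ((F × F) × (F × F)),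
      s ≤ S.card ∧ ↑S ⊆ 𝓛 ∧
      (∀ L ∈ S, p ∈ lineImage L) ∧
      (∀ L ∈ S, ∀ L' ∈ S, L ≠ L' → lineImage L ≠ lineImage L')) :
    ∀ p : F × F, ∃ R : Fin s → Finset (F × F),
      (∀ i j, i ≠ j → Disjoint (R i) (R j)) ∧
      ∀ i, p ∉ R i ∧
        ∀ P Q : MvPolynomial (Fin 2) F,
          (∀ L ∈ 𝓛, RestrictsNicely q P L) →
          (∀ L ∈ 𝓛, RestrictsNicely q Q L) →
          (∀ x ∈ R i, MvPolynomial.eval ![x.1, x.2] P = MvPolynomial.eval ![x.1, x.2] Q) →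
          MvPolynomial.eval ![p.1, p.2] P = MvPolynomial.eval ![p.1, p.2] Q := by
  classical
  intro p
  obtain ⟨S, hScard, hsub, hmemS, hdist⟩ := hcover p
  have hemb : Nonempty (Fin s ↪ {L // L ∈ S}) := by
    apply Function.Embedding.nonempty_of_card_le
    simpa [Fintype.card_coe] using hScard
  obtain ⟨e⟩ := hemb
  set Li : Fin s → ((F × F) × (F × F)) := fun i => (e i : ((F × F) × (F × F))) with hLi
  have hLiS : ∀ i, Li i ∈ S := fun i => (e i).2
  have hLi𝓛 : ∀ i, Li i ∈ 𝓛 := fun i => hsub (hLiS i)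
  refine ⟨fun i => (Finset.univ.image (fun t => lineFun (Li i) t)).erase p, ?_, ?_⟩
  · intro i j hij
    rw [Finset.disjoint_left]
    intro x hxi hxj
    have hxp : x ≠ p := Finset.ne_of_mem_erase hxi
    have hxi' : x ∈ lineImage (Li i) := by
      obtain ⟨t, _, ht⟩ := Finset.mem_image.mp (Finset.mem_of_mem_erase hxi)
      exact ⟨t, ht⟩
    have hxj' : x ∈ lineImage (Li j) := by
      obtain ⟨t, _, ht⟩ := Finset.mem_image.mp (Finset.mem_of_mem_erase hxj)
      exact ⟨t, ht⟩
    have hne : Li i ≠ Li j := by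
      intro h
      exact hij (e.injective (Subtype.ext h))
    exact hdist _ (hLiS i) _ (hLiS j) hne
      (lineImage_eq_of_two_points (hnd _ (hLi𝓛 i)) (hnd _ (hLi𝓛 j)) hxp
        (hmemS _ (hLiS i)) (hmemS _ (hLiS j)) hxi' hxj')
  · intro i
    refine ⟨Finset.notMem_erase _ _, ?_⟩
    intro P Q hP hQ hag
    obtain ⟨t₀, ht₀⟩ := hmemS _ (hLiS i)
    have ht₀' : lineFun (Li i) t₀ = p := ht₀
    have hinj := lineFun_injective (hnd _ (hLi𝓛 i))
    have hcard' : Fintype.card F = q := by rw [hF, hq]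
    have hsumP := sum_line_eval_eq_zero hcard' P _ (hP _ (hLi𝓛 i))
    have hsumQ := sum_line_eval_eq_zero hcard' Q _ (hQ _ (hLi𝓛 i))
    rw [← Finset.add_sum_erase Finset.univ _ (Finset.mem_univ t₀)] at hsumP hsumQ
    have hrest : ∑ t ∈ Finset.univ.erase t₀,
          MvPolynomial.eval ![(lineFun (Li i) t).1, (lineFun (Li i) t).2] P
        = ∑ t ∈ Finset.univ.erase t₀,
          MvPolynomial.eval ![(lineFun (Li i) t).1, (lineFun (Li i) t).2] Q := by
      refine Finset.sum_congr rfl fun t ht => ?_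
      apply hag
      refine Finset.mem_erase.mpr ⟨?_, Finset.mem_image_of_mem _ (Finset.mem_univ t)⟩
      intro hcon
      exact (Finset.mem_erase.mp ht).1 (hinj (hcon.trans ht₀'.symm))
    rw [← ht₀']
    have e1 : MvPolynomial.eval ![(lineFun (Li i) t₀).1, (lineFun (Li i) t₀).2] P
        = -∑ t ∈ Finset.univ.erase t₀,
            MvPolynomial.eval ![(lineFun (Li i) t).1, (lineFun (Li i) t).2] P :=
      eq_neg_of_add_eq_zero_left hsumP
    have e2 : MvPolynomial.eval ![(lineFun (Li i) t₀).1, (lineFun (Li i) t₀).2] Q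
        = -∑ t ∈ Finset.univ.erase t₀,
            MvPolynomial.eval ![(lineFun (Li i) t).1, (lineFun (Li i) t).2] Q :=
      eq_neg_of_add_eq_zero_left hsumQ
    rw [e1, e2, hrest]
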